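/- Let L ≥ 1. Let θ_1,…,θ_L, a_1,…,a_L, b_1,…,b_L be real numbers and set Θ = diag(e^{iθ_1},…,e^{iθ_L}). Let h̄_a, h̄_b ∈ ℂ^L have entries h̄_{a,ℓ} = e^{i a_ℓ} and h̄_{b,ℓ} = e^{i b_ℓ}. Let h̃_a, h̃_b be independent ℂ^L-valued random vectors with mean zero, E[h̃_a h̃_a^H] = I_L and E[h̃_b h̃_b^H] = I_L. For ε, β > 0 define h_a = √(ε/(ε+1)) h̄_a + √(1/(ε+1)) h̃_a and h_b = √(β/(β+1)) h̄_b + √(1/(β+1)) h̃_b. Then E[|h_b^T Θ h_a|²] = (ε β Γ + L(ε + β) + L)/((ε+1)(β+1)), where Γ = |Σ_{ℓ=1}^L e^{i(θ_ℓ + a_ℓ + b_ℓ)}|². -/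

import Mathlib

open MeasureTheory ProbabilityTheory Complex Finset

section helpers
variable {Ω : Type*} [MeasurableSpace Ω] {μ : Measure Ω}

noncomputable def eI (t : ℝ) : ℂ := Complex.exp (Complex.I * (t : ℂ))

lemma eI_def (t : ℝ) : Complex.exp (Complex.I * (t : ℂ)) = eI t := rfl

lemma eI_add (s t : ℝ) : eI (s + t) = eI s * eI t := by
  rw [eI, eI, eI, ← Complex.exp_add, Complex.ofReal_add, mul_add]

lemma eI_mul_conj_self (t : ℝ) : eI t * (starRingEnd ℂ) (eI t) = 1 := by
  have h : ‖eI t‖ = 1 := by simp [eI, Complex.norm_exp]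
  rw [Complex.mul_conj, Complex.normSq_eq_norm_sq, h]
  norm_num

lemma memLp_conj {f : Ω → ℂ} (hf : MemLp f 2 μ) :
    MemLp (fun ω => (starRingEnd ℂ) (f ω)) 2 μ := by
  refine ⟨RCLike.continuous_conj.comp_aestronglyMeasurable hf.1, ?_⟩
  rw [show (fun ω => (starRingEnd ℂ) (f ω)) = (starRingEnd (Ω → ℂ)) f from rfl,
    eLpNorm_conj]
  exact hf.2

lemma l2_mul_integrable {f g : Ω → ℂ} (hf : MemLp f 2 μ) (hg : MemLp g 2 μ) :
    Integrable (fun ω => f ω * g ω) μ := by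
  have h := hg.smul hf (p := 2) (q := 2) (r := 1)
  rw [memLp_one_iff_integrable] at h
  exact h.congr (by filter_upwards with ω; simp [smul_eq_mul])

lemma indep_integral_mul {X Y : Ω → ℂ} (h : IndepFun X Y μ) (hX : Integrable X μ)
    (hY : Integrable Y μ) :
    ∫ ω, X ω * Y ω ∂μ = (∫ ω, X ω ∂μ) * ∫ ω, Y ω ∂μ := by
  have hXr : Integrable (fun ω => (X ω).re) μ := hX.re
  have hXi : Integrable (fun ω => (X ω).im) μ := hX.im
  have hYr : Integrable (fun ω => (Y ω).re) μ := hY.re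
  have hYi : Integrable (fun ω => (Y ω).im) μ := hY.im
  have irr : Integrable (fun ω => (X ω).re * (Y ω).re) μ :=
    (h.comp Complex.measurable_re Complex.measurable_re).integrable_mul hXr hYr
  have iri : Integrable (fun ω => (X ω).re * (Y ω).im) μ :=
    (h.comp Complex.measurable_re Complex.measurable_im).integrable_mul hXr hYi
  have iir : Integrable (fun ω => (X ω).im * (Y ω).re) μ :=
    (h.comp Complex.measurable_im Complex.measurable_re).integrable_mul hXi hYr
  have iii : Integrable (fun ω => (X ω).im * (Y ω).im) μ :=
    (h.comp Complex.measurable_im Complex.measurable_im).integrable_mul hXi hYi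
  have hrr : (∫ ω, (X ω).re * (Y ω).re ∂μ) = (∫ ω, (X ω).re ∂μ) * ∫ ω, (Y ω).re ∂μ :=
    (h.comp Complex.measurable_re Complex.measurable_re).integral_fun_mul_eq_mul_integral hXr.1 hYr.1
  have hri : (∫ ω, (X ω).re * (Y ω).im ∂μ) = (∫ ω, (X ω).re ∂μ) * ∫ ω, (Y ω).im ∂μ :=
    (h.comp Complex.measurable_re Complex.measurable_im).integral_fun_mul_eq_mul_integral hXr.1 hYi.1
  have hir : (∫ ω, (X ω).im * (Y ω).re ∂μ) = (∫ ω, (X ω).im ∂μ) * ∫ ω, (Y ω).re ∂μ :=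
    (h.comp Complex.measurable_im Complex.measurable_re).integral_fun_mul_eq_mul_integral hXi.1 hYr.1
  have hii : (∫ ω, (X ω).im * (Y ω).im ∂μ) = (∫ ω, (X ω).im ∂μ) * ∫ ω, (Y ω).im ∂μ :=
    (h.comp Complex.measurable_im Complex.measurable_im).integral_fun_mul_eq_mul_integral hXi.1 hYi.1
  have hXY : Integrable (fun ω => X ω * Y ω) μ := h.integrable_mul hX hY
  have key : ∀ (f : Ω → ℂ), Integrable f μ →
      (∫ ω, f ω ∂μ) = Complex.mk (∫ ω, (f ω).re ∂μ) (∫ ω, (f ω).im ∂μ) := by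
    intro f hf
    apply Complex.ext
    · simpa using (integral_re hf).symm
    · simpa using (integral_im hf).symm
  rw [key _ hXY, key _ hX, key _ hY]
  apply Complex.ext
  · have e : (∫ ω, (X ω * Y ω).re ∂μ)
        = ∫ ω, ((X ω).re * (Y ω).re - (X ω).im * (Y ω).im) ∂μ :=
      integral_congr_ae (by filter_upwards with ω; rw [Complex.mul_re])
    simp only [Complex.mul_re, e, integral_sub irr iii, hrr, hii]
  · have e : (∫ ω, (X ω * Y ω).im ∂μ)
        = ∫ ω, ((X ω).re * (Y ω).im + (X ω).im * (Y ω).re) ∂μ :=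
      integral_congr_ae (by filter_upwards with ω; rw [Complex.mul_im])
    simp only [Complex.mul_im, e, integral_add iri iir, hri, hir]

lemma moment_aux [IsProbabilityMeasure μ] {L : ℕ}
    (h : Ω → Fin L → ℂ) (hl2 : ∀ ℓ, MemLp (fun ω => h ω ℓ) 2 μ)
    (hmean : ∀ ℓ, ∫ ω, h ω ℓ ∂μ = 0)
    (hcov : ∀ k l, ∫ ω, h ω k * (starRingEnd ℂ) (h ω l) ∂μ = if k = l then 1 else 0)
    (c d : ℝ) (u v : ℂ) (k l : Fin L) :
    ∫ ω, ((c : ℂ) * u + (d : ℂ) * h ω k) * (starRingEnd ℂ) ((c : ℂ) * v + (d : ℂ) * h ω l) ∂μ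
      = (c : ℂ)^2 * (u * (starRingEnd ℂ) v) + (d : ℂ)^2 * (if k = l then 1 else 0) := by
  have i1c : Integrable (fun ω => (starRingEnd ℂ) (h ω l)) μ :=
    (memLp_conj (hl2 l)).integrable one_le_two
  have i2 : Integrable (fun ω => h ω k) μ := (hl2 k).integrable one_le_two
  have i3 : Integrable (fun ω => h ω k * (starRingEnd ℂ) (h ω l)) μ :=
    l2_mul_integrable (hl2 k) (memLp_conj (hl2 l))
  have expand : ∀ ω : Ω,
      ((c : ℂ) * u + (d : ℂ) * h ω k) * (starRingEnd ℂ) ((c : ℂ) * v + (d : ℂ) * h ω l)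
      = ((c : ℂ)^2 * (u * (starRingEnd ℂ) v)
        + ((c : ℂ) * u * (d : ℂ)) * (starRingEnd ℂ) (h ω l))
        + (((d : ℂ) * (c : ℂ) * (starRingEnd ℂ) v) * h ω k
        + (d : ℂ)^2 * (h ω k * (starRingEnd ℂ) (h ω l))) := by
    intro ω
    simp only [map_add, map_mul, Complex.conj_ofReal]
    ring
  rw [integral_congr_ae (Filter.Eventually.of_forall expand)]
  have A : Integrable (fun a => (c:ℂ)^2*(u * (starRingEnd ℂ) v)
      + (c:ℂ)*u*(d:ℂ) * (starRingEnd ℂ) (h a l)) μ :=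
    (integrable_const _).add (i1c.const_mul _)
  have B : Integrable (fun a => (d:ℂ)*(c:ℂ)*(starRingEnd ℂ) v * h a k
      + (d:ℂ)^2 * (h a k * (starRingEnd ℂ) (h a l))) μ :=
    (i2.const_mul _).add (i3.const_mul _)
  rw [integral_add A B,
    integral_add (integrable_const _) (i1c.const_mul _),
    integral_add (i2.const_mul _) (i3.const_mul _)]
  simp [integral_const_mul, integral_conj, hmean, hcov]

end helpers

/-- Second moment of the cascaded Rician channel through an RIS with
deterministic phase-shift matrix `Θ = diag(e^{iθ_1}, …, e^{iθ_L})` and no phase noise: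
with LoS components `h̄_{a,ℓ} = e^{i a_ℓ}`, `h̄_{b,ℓ} = e^{i b_ℓ}`, independent zero-mean
identity-covariance scattered components `h̃_a, h̃_b`, and Rician factors `ε, β > 0`,
the channels `h_a = √(ε/(ε+1)) h̄_a + √(1/(ε+1)) h̃_a` and
`h_b = √(β/(β+1)) h̄_b + √(1/(β+1)) h̃_b` satisfy
`E[|h_b^T Θ h_a|²] = (ε β Γ + L(ε+β) + L)/((ε+1)(β+1))`, where
`Γ = |∑_ℓ e^{i(θ_ℓ + a_ℓ + b_ℓ)}|²`. -/
theorem cascaded_rician_second_moment_no_phase_noise {Ω : Type*} [MeasurableSpace Ω]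
    (μ : Measure Ω) [IsProbabilityMeasure μ] (L : ℕ) (hL : 1 ≤ L)
    (θ a b : Fin L → ℝ) (ε β : ℝ) (hε : 0 < ε) (hβ : 0 < β)
    (hta htb : Ω → Fin L → ℂ)
    (hta_meas : Measurable hta) (htb_meas : Measurable htb)
    (hta_l2 : ∀ ℓ, MeasureTheory.MemLp (fun ω => hta ω ℓ) 2 μ)
    (htb_l2 : ∀ ℓ, MeasureTheory.MemLp (fun ω => htb ω ℓ) 2 μ)
    (hta_mean : ∀ ℓ, ∫ ω, hta ω ℓ ∂μ = 0) (htb_mean : ∀ ℓ, ∫ ω, htb ω ℓ ∂μ = 0)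
    (hta_cov : ∀ k l, ∫ ω, hta ω k * (starRingEnd ℂ) (hta ω l) ∂μ = if k = l then 1 else 0)
    (htb_cov : ∀ k l, ∫ ω, htb ω k * (starRingEnd ℂ) (htb ω l) ∂μ = if k = l then 1 else 0)
    (hindep : ProbabilityTheory.IndepFun hta htb μ)
    (ha hb : Ω → Fin L → ℂ)
    (hha : ∀ ω ℓ, ha ω ℓ = (Real.sqrt (ε / (ε + 1)) : ℂ) * Complex.exp (Complex.I * (a ℓ : ℂ))
      + (Real.sqrt (1 / (ε + 1)) : ℂ) * hta ω ℓ)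
    (hhb : ∀ ω ℓ, hb ω ℓ = (Real.sqrt (β / (β + 1)) : ℂ) * Complex.exp (Complex.I * (b ℓ : ℂ))
      + (Real.sqrt (1 / (β + 1)) : ℂ) * htb ω ℓ) :
    ∫ ω, ‖(∑ ℓ : Fin L,
        hb ω ℓ * Complex.exp (Complex.I * (θ ℓ : ℂ)) * ha ω ℓ)‖ ^ 2 ∂μ =
      (ε * β * ‖(∑ ℓ : Fin L,
          Complex.exp (Complex.I * ((θ ℓ + a ℓ + b ℓ : ℝ) : ℂ)))‖ ^ 2
        + (L : ℝ) * (ε + β) + (L : ℝ)) / ((ε + 1) * (β + 1)) := by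
  have hε1 : (0:ℝ) < ε + 1 := by linarith
  have hβ1 : (0:ℝ) < β + 1 := by linarith
  set cA : ℝ := Real.sqrt (ε / (ε + 1)) with hcAdef
  set sA : ℝ := Real.sqrt (1 / (ε + 1)) with hsAdef
  set cB : ℝ := Real.sqrt (β / (β + 1)) with hcBdef
  set sB : ℝ := Real.sqrt (1 / (β + 1)) with hsBdef
  have hcA : ((cA : ℂ))^2 = ((ε/(ε+1) : ℝ) : ℂ) := by
    rw [← Complex.ofReal_pow, Real.sq_sqrt (by positivity)]
  have hsA : ((sA : ℂ))^2 = ((1/(ε+1) : ℝ) : ℂ) := by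
    rw [← Complex.ofReal_pow, Real.sq_sqrt (by positivity)]
  have hcB : ((cB : ℂ))^2 = ((β/(β+1) : ℝ) : ℂ) := by
    rw [← Complex.ofReal_pow, Real.sq_sqrt (by positivity)]
  have hsB : ((sB : ℂ))^2 = ((1/(β+1) : ℝ) : ℂ) := by
    rw [← Complex.ofReal_pow, Real.sq_sqrt (by positivity)]
  -- abbreviations for the channel entries
  have hha' : ∀ ω ℓ, ha ω ℓ = (cA : ℂ) * eI (a ℓ) + (sA : ℂ) * hta ω ℓ := by
    intro ω ℓ; rw [hha ω ℓ]; rfl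
  have hhb' : ∀ ω ℓ, hb ω ℓ = (cB : ℂ) * eI (b ℓ) + (sB : ℂ) * htb ω ℓ := by
    intro ω ℓ; rw [hhb ω ℓ]; rfl
  -- second-order moments of the channels
  have Ea : ∀ k l : Fin L,
      (∫ ω, ((cA : ℂ) * eI (a k) + (sA : ℂ) * hta ω k)
        * (starRingEnd ℂ) ((cA : ℂ) * eI (a l) + (sA : ℂ) * hta ω l) ∂μ)
      = ((ε/(ε+1) : ℝ) : ℂ) * (eI (a k) * (starRingEnd ℂ) (eI (a l)))
        + ((1/(ε+1) : ℝ) : ℂ) * (if k = l then 1 else 0) := by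
    intro k l
    rw [moment_aux hta hta_l2 hta_mean hta_cov cA sA (eI (a k)) (eI (a l)) k l, hcA, hsA]
  have Eb : ∀ k l : Fin L,
      (∫ ω, ((cB : ℂ) * eI (b k) + (sB : ℂ) * htb ω k)
        * (starRingEnd ℂ) ((cB : ℂ) * eI (b l) + (sB : ℂ) * htb ω l) ∂μ)
      = ((β/(β+1) : ℝ) : ℂ) * (eI (b k) * (starRingEnd ℂ) (eI (b l)))
        + ((1/(β+1) : ℝ) : ℂ) * (if k = l then 1 else 0) := by
    intro k l
    rw [moment_aux htb htb_l2 htb_mean htb_cov cB sB (eI (b k)) (eI (b l)) k l, hcB, hsB]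
  -- membership / integrability
  have memA : ∀ k, MemLp (fun ω => (cA : ℂ) * eI (a k) + (sA : ℂ) * hta ω k) 2 μ :=
    fun k => (memLp_const ((cA : ℂ) * eI (a k))).add ((hta_l2 k).const_mul (sA : ℂ))
  have memB : ∀ k, MemLp (fun ω => (cB : ℂ) * eI (b k) + (sB : ℂ) * htb ω k) 2 μ :=
    fun k => (memLp_const ((cB : ℂ) * eI (b k))).add ((htb_l2 k).const_mul (sB : ℂ))
  have intA : ∀ k l, Integrable (fun ω =>
      ((cA : ℂ) * eI (a k) + (sA : ℂ) * hta ω k)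
      * (starRingEnd ℂ) ((cA : ℂ) * eI (a l) + (sA : ℂ) * hta ω l)) μ :=
    fun k l => l2_mul_integrable (memA k) (memLp_conj (memA l))
  have intB : ∀ k l, Integrable (fun ω =>
      ((cB : ℂ) * eI (b k) + (sB : ℂ) * htb ω k)
      * (starRingEnd ℂ) ((cB : ℂ) * eI (b l) + (sB : ℂ) * htb ω l)) μ :=
    fun k l => l2_mul_integrable (memB k) (memLp_conj (memB l))
  have hIndep : ∀ k l : Fin L, IndepFun
      (fun ω => ((cB : ℂ) * eI (b k) + (sB : ℂ) * htb ω k)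
        * (starRingEnd ℂ) ((cB : ℂ) * eI (b l) + (sB : ℂ) * htb ω l))
      (fun ω => ((cA : ℂ) * eI (a k) + (sA : ℂ) * hta ω k)
        * (starRingEnd ℂ) ((cA : ℂ) * eI (a l) + (sA : ℂ) * hta ω l)) μ := by
    intro k l
    have hconj : Measurable (starRingEnd ℂ) := RCLike.continuous_conj.measurable
    have hmB : Measurable (fun v : Fin L → ℂ =>
        ((cB : ℂ) * eI (b k) + (sB : ℂ) * v k)
        * (starRingEnd ℂ) ((cB : ℂ) * eI (b l) + (sB : ℂ) * v l)) :=
      (measurable_const.add ((measurable_pi_apply k).const_mul _)).mul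
        (hconj.comp (measurable_const.add ((measurable_pi_apply l).const_mul _)))
    have hmA : Measurable (fun v : Fin L → ℂ =>
        ((cA : ℂ) * eI (a k) + (sA : ℂ) * v k)
        * (starRingEnd ℂ) ((cA : ℂ) * eI (a l) + (sA : ℂ) * v l)) :=
      (measurable_const.add ((measurable_pi_apply k).const_mul _)).mul
        (hconj.comp (measurable_const.add ((measurable_pi_apply l).const_mul _)))
    exact hindep.symm.comp hmB hmA
  have intTerm : ∀ k l : Fin L, Integrable (fun ω =>
      (eI (θ k) * (starRingEnd ℂ) (eI (θ l))) *
      ((((cB : ℂ) * eI (b k) + (sB : ℂ) * htb ω k)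
        * (starRingEnd ℂ) ((cB : ℂ) * eI (b l) + (sB : ℂ) * htb ω l))
      * (((cA : ℂ) * eI (a k) + (sA : ℂ) * hta ω k)
        * (starRingEnd ℂ) ((cA : ℂ) * eI (a l) + (sA : ℂ) * hta ω l)))) μ :=
    fun k l => (((hIndep k l).integrable_mul (intB k l) (intA k l)).const_mul _)
  -- constants
  obtain ⟨c1, hc1⟩ : ∃ c : ℂ, c = ((β/(β+1) : ℝ) : ℂ) * ((ε/(ε+1) : ℝ) : ℂ) := ⟨_, rfl⟩
  obtain ⟨c2, hc2⟩ : ∃ c : ℂ, c = ((β/(β+1) : ℝ) : ℂ) * ((1/(ε+1) : ℝ) : ℂ)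
      + ((1/(β+1) : ℝ) : ℂ) * ((ε/(ε+1) : ℝ) : ℂ)
      + ((1/(β+1) : ℝ) : ℂ) * ((1/(ε+1) : ℝ) : ℂ) := ⟨_, rfl⟩
  -- value of each term
  have termval : ∀ k l : Fin L,
      (∫ ω, (eI (θ k) * (starRingEnd ℂ) (eI (θ l))) *
        ((((cB : ℂ) * eI (b k) + (sB : ℂ) * htb ω k)
          * (starRingEnd ℂ) ((cB : ℂ) * eI (b l) + (sB : ℂ) * htb ω l))
        * (((cA : ℂ) * eI (a k) + (sA : ℂ) * hta ω k)
          * (starRingEnd ℂ) ((cA : ℂ) * eI (a l) + (sA : ℂ) * hta ω l))) ∂μ)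
      = c1 * (eI (θ k + a k + b k) * (starRingEnd ℂ) (eI (θ l + a l + b l)))
        + (if k = l then c2 else 0) := by
    intro k l
    rw [integral_const_mul,
      indep_integral_mul (hIndep k l) (intB k l) (intA k l), Eb k l, Ea k l]
    have hG : ∀ j : Fin L, eI (θ j + a j + b j) = eI (θ j) * eI (a j) * eI (b j) := by
      intro j; rw [eI_add, eI_add]
    have hεne : ((ε:ℂ)+1) ≠ 0 := by
      simpa using Complex.ofReal_ne_zero.2 hε1.ne'
    have hβne : ((β:ℂ)+1) ≠ 0 := by
      simpa using Complex.ofReal_ne_zero.2 hβ1.ne'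
    by_cases hkl : k = l
    · subst hkl
      simp only [eI_mul_conj_self, eq_self_iff_true, if_true, hc1, hc2, mul_one]
      push_cast
      field_simp
      ring
    · simp only [if_neg hkl, mul_zero, add_zero, mul_one]
      rw [hG k, hG l, map_mul, map_mul, hc1]
      ring
  -- pointwise expansion of |S|^2
  have habs : ∀ z : ℂ, ((‖z‖ ^ 2 : ℝ) : ℂ) = z * (starRingEnd ℂ) z := by
    intro z; rw [Complex.sq_norm]; exact (Complex.mul_conj z).symm
  have hpoint : ∀ ω : Ω,
      ((‖(∑ ℓ : Fin L,
          hb ω ℓ * Complex.exp (Complex.I * (θ ℓ : ℂ)) * ha ω ℓ)‖ ^ 2 : ℝ) : ℂ)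
      = ∑ k : Fin L, ∑ l : Fin L, (eI (θ k) * (starRingEnd ℂ) (eI (θ l))) *
        ((((cB : ℂ) * eI (b k) + (sB : ℂ) * htb ω k)
          * (starRingEnd ℂ) ((cB : ℂ) * eI (b l) + (sB : ℂ) * htb ω l))
        * (((cA : ℂ) * eI (a k) + (sA : ℂ) * hta ω k)
          * (starRingEnd ℂ) ((cA : ℂ) * eI (a l) + (sA : ℂ) * hta ω l))) := by
    intro ω
    rw [habs, map_sum, Finset.sum_mul_sum]
    refine Finset.sum_congr rfl fun k _ => Finset.sum_congr rfl fun l _ => ?_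
    rw [hha' ω k, hha' ω l, hhb' ω k, hhb' ω l]
    simp only [eI_def, map_mul]
    ring
  refine Complex.ofReal_injective ?_
  have ofr : (↑(∫ ω, ‖(∑ ℓ : Fin L,
        hb ω ℓ * Complex.exp (Complex.I * (θ ℓ : ℂ)) * ha ω ℓ)‖ ^ 2 ∂μ) : ℂ)
      = ∫ ω, ((‖(∑ ℓ : Fin L,
        hb ω ℓ * Complex.exp (Complex.I * (θ ℓ : ℂ)) * ha ω ℓ)‖ ^ 2 : ℝ) : ℂ) ∂μ :=
    (integral_ofReal (𝕜 := ℂ)).symm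
  rw [ofr, integral_congr_ae (Filter.Eventually.of_forall hpoint),
    integral_finset_sum _ (fun k _ => integrable_finset_sum _ (fun l _ => intTerm k l))]
  have step : (∑ k : Fin L, ∫ ω, ∑ l : Fin L,
        (eI (θ k) * (starRingEnd ℂ) (eI (θ l))) *
        ((((cB : ℂ) * eI (b k) + (sB : ℂ) * htb ω k)
          * (starRingEnd ℂ) ((cB : ℂ) * eI (b l) + (sB : ℂ) * htb ω l))
        * (((cA : ℂ) * eI (a k) + (sA : ℂ) * hta ω k)
          * (starRingEnd ℂ) ((cA : ℂ) * eI (a l) + (sA : ℂ) * hta ω l))) ∂μ)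
      = ∑ k : Fin L, ∑ l : Fin L,
        (c1 * (eI (θ k + a k + b k) * (starRingEnd ℂ) (eI (θ l + a l + b l)))
          + (if k = l then c2 else 0)) := by
    refine Finset.sum_congr rfl fun k _ => ?_
    rw [integral_finset_sum _ (fun l _ => intTerm k l)]
    exact Finset.sum_congr rfl fun l _ => termval k l
  rw [step]
  have sumsplit : (∑ k : Fin L, ∑ l : Fin L,
        (c1 * (eI (θ k + a k + b k) * (starRingEnd ℂ) (eI (θ l + a l + b l)))
          + (if k = l then c2 else 0)))
      = c1 * ((∑ ℓ : Fin L, eI (θ ℓ + a ℓ + b ℓ))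
          * (starRingEnd ℂ) (∑ ℓ : Fin L, eI (θ ℓ + a ℓ + b ℓ))) + (L : ℂ) * c2 := by
    simp only [Finset.sum_add_distrib, Finset.sum_ite_eq, Finset.mem_univ, if_true]
    rw [Finset.sum_const, Finset.card_univ, Fintype.card_fin]
    congr 1
    · rw [map_sum, Finset.sum_mul_sum, Finset.mul_sum]
      exact Finset.sum_congr rfl fun k _ => by rw [Finset.mul_sum]
    · rw [nsmul_eq_mul]
  rw [sumsplit, ← habs]
  have hεne : ((ε:ℂ)+1) ≠ 0 := by simpa using Complex.ofReal_ne_zero.2 hε1.ne'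
  have hβne : ((β:ℂ)+1) ≠ 0 := by simpa using Complex.ofReal_ne_zero.2 hβ1.ne'
  simp only [eI_def, hc1, hc2]
  push_cast
  field_simp
  ring
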